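/- Let V be a real random variable with all moments finite and ξ another random variable. If E[V^m | ξ] = E[V^m] almost surely for every nonnegative integer m, and V is normally distributed N(0, c²) (so its law is determined by its moments), then E[exp(itV) | ξ] = exp(−t²c²/2) almost surely for every real t. -/

import Mathlib

open MeasureTheory ProbabilityTheory Filter NNReal ENNReal

section Aux

lemma my_integrable_exp_lin_sub_sq (a b : ℝ) (hb : 0 < b) :
    Integrable (fun x : ℝ => Real.exp (a * x - b * x ^ 2)) := by
  have h := ((integrable_exp_neg_mul_sq hb).comp_sub_right (a / (2 * b))).const_mul
    (Real.exp (a ^ 2 / (4 * b)))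
  refine h.congr (Filter.Eventually.of_forall fun x => ?_)
  show Real.exp _ * Real.exp _ = _
  rw [← Real.exp_add]
  congr 1
  field_simp
  ring

lemma my_integrable_exp_mul_gaussian (a : ℝ) (v : ℝ≥0) (hv : v ≠ 0) :
    Integrable (fun x : ℝ => Real.exp (a * x)) (gaussianReal 0 v) := by
  rw [gaussianReal_of_var_ne_zero 0 hv, gaussianPDF_def,
    integrable_withDensity_iff ((measurable_gaussianPDFReal 0 v).ennreal_ofReal) (ae_of_all _ fun x => ENNReal.ofReal_lt_top)]
  have : ∀ x : ℝ, Real.exp (a * x) * (ENNReal.ofReal (gaussianPDFReal 0 v x)).toReal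
      = (Real.sqrt (2 * Real.pi * v))⁻¹ * Real.exp (a * x - (2 * (v:ℝ))⁻¹ * x ^ 2) := by
    intro x
    rw [ENNReal.toReal_ofReal (gaussianPDFReal_nonneg 0 v x), gaussianPDFReal]
    rw [mul_comm (Real.exp (a*x)), mul_assoc, ← Real.exp_add]
    congr 2
    have hv' : (v:ℝ) ≠ 0 := by exact_mod_cast hv
    field_simp
    ring
  simp_rw [this]
  exact (my_integrable_exp_lin_sub_sq a (2 * (v:ℝ))⁻¹ (by positivity)).const_mul _

lemma my_charFun_gaussian (t : ℝ) (v : ℝ≥0) (hv : v ≠ 0) :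
    ∫ x : ℝ, Complex.exp (t * x * Complex.I) ∂(gaussianReal 0 v)
      = (Real.exp (-(t ^ 2 * v) / 2) : ℂ) := by
  have hv' : (0:ℝ) < v := lt_of_le_of_ne v.coe_nonneg (by exact_mod_cast hv.symm)
  rw [gaussianReal_of_var_ne_zero 0 hv, gaussianPDF_def]
  have hrw : (fun x => ENNReal.ofReal (gaussianPDFReal 0 v x))
      = fun x => ((Real.toNNReal (gaussianPDFReal 0 v x) : ℝ≥0) : ℝ≥0∞) := rfl -- FIX
  rw [hrw, integral_withDensity_eq_integral_smul ((measurable_gaussianPDFReal 0 v).real_toNNReal) _]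
  have hpt : ∀ x : ℝ, Real.toNNReal (gaussianPDFReal 0 v x) • Complex.exp (t * x * Complex.I)
      = ((Real.sqrt (2 * Real.pi * v))⁻¹ : ℂ) *
        Complex.exp ((-(2 * (v:ℝ) : ℂ)⁻¹) * x ^ 2 + (t * Complex.I) * x + 0) := by
    intro x
    rw [NNReal.smul_def, Real.coe_toNNReal _ (gaussianPDFReal_nonneg 0 v x), gaussianPDFReal]
    push_cast
    rw [Complex.real_smul]
    push_cast
    rw [mul_assoc]
    congr 1
    rw [← Complex.exp_add]
    congr 1
    have : ((v:ℝ):ℂ) ≠ 0 := by exact_mod_cast hv'.ne'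
    field_simp
    ring
  simp_rw [hpt]
  rw [integral_const_mul, integral_cexp_quadratic (by
    simp [Complex.inv_re, Complex.normSq, Complex.normSq_apply]
    positivity) (t * Complex.I) 0]
  have h1 : (Real.pi : ℂ) / -(-(2 * (v:ℝ) : ℂ)⁻¹) = ((2 * Real.pi * v : ℝ) : ℂ) := by
    have : ((v:ℝ):ℂ) ≠ 0 := by exact_mod_cast hv'.ne'
    push_cast
    field_simp
  rw [h1]
  have h2 : ((2 * Real.pi * v : ℝ) : ℂ) ^ (1/2 : ℂ)
      = ((Real.sqrt (2 * Real.pi * v) : ℝ) : ℂ) := by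
    rw [Real.sqrt_eq_rpow, Complex.ofReal_cpow (by positivity)]
    norm_num
  rw [h2]
  have hs : ((Real.sqrt (2 * Real.pi * v) : ℝ) : ℂ) ≠ 0 := by
    exact_mod_cast (Real.sqrt_pos.2 (by positivity)).ne'
  rw [← mul_assoc, inv_mul_cancel₀ hs, one_mul]
  rw [Complex.ofReal_exp]
  congr 1
  have : ((v:ℝ):ℂ) ≠ 0 := by exact_mod_cast hv'.ne'
  have hI : Complex.I ^ 2 = -1 := Complex.I_sq
  push_cast
  field_simp
  ring_nf
  rw [hI]
  ring

end Aux

/-- If all conditional moments of a Gaussian `V ~ N(0, c²)` given `ξ` coincide with the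
unconditional ones, then the conditional characteristic function of `V` given `ξ` is the
Gaussian characteristic function `exp (−t² c² / 2)`, a.s. -/
theorem condexp_charFun_gaussian_of_condexp_moments
    {Ω : Type*} [MeasurableSpace Ω] (μ : Measure Ω) [IsProbabilityMeasure μ]
    (c : ℝ) (hc : 0 < c)
    (V ξ : Ω → ℝ) (hV : Measurable V) (hξ : Measurable ξ)
    (hmom : ∀ m : ℕ, Integrable (fun ω => V ω ^ m) μ)
    (hVgauss : μ.map V = gaussianReal 0 (Real.toNNReal (c ^ 2)))
    (hcond : ∀ m : ℕ,
      μ[fun ω => V ω ^ m | MeasurableSpace.comap ξ inferInstance] =ᵐ[μ]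
        fun _ => ∫ ω, V ω ^ m ∂μ) :
    ∀ t : ℝ,
      μ[fun ω => Complex.exp (t * V ω * Complex.I) | MeasurableSpace.comap ξ inferInstance]
        =ᵐ[μ] fun _ => (Real.exp (-(t ^ 2 * c ^ 2) / 2) : ℂ) := by
  intro t
  have hm : MeasurableSpace.comap ξ (inferInstance : MeasurableSpace ℝ)
      ≤ (by infer_instance : MeasurableSpace Ω) := hξ.comap_le
  set v : ℝ≥0 := Real.toNNReal (c ^ 2) with hv_def
  have hvc : (v : ℝ) = c ^ 2 := Real.coe_toNNReal _ (sq_nonneg c)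
  have hv : v ≠ 0 := by
    intro h
    rw [h] at hvc
    simp at hvc
    exact absurd hvc (by positivity)
  set f : Ω → ℂ := fun ω => Complex.exp (t * V ω * Complex.I) with hf_def
  have hVc : Measurable fun ω => (t : ℂ) * V ω * Complex.I :=
    (measurable_const.mul (Complex.measurable_ofReal.comp hV)).mul_const _
  have hf_meas : Measurable f := Complex.measurable_exp.comp hVc
  -- integrability of f
  have hf_norm : ∀ ω, ‖f ω‖ = 1 := by
    intro ω
    simp [hf_def, Complex.norm_exp]
  have hf_int : Integrable f μ := by
    refine ⟨hf_meas.aestronglyMeasurable, ?_⟩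
    refine (hasFiniteIntegral_const (1:ℝ)).mono' (ae_of_all _ fun ω => ?_)
    rw [hf_norm ω]
  -- exponential integrability
  have hexp_comp : ∀ a : ℝ, Integrable (fun ω => Real.exp (a * V ω)) μ := by
    intro a
    have h0 := my_integrable_exp_mul_gaussian a v hv
    rw [← hVgauss] at h0
    exact (integrable_map_measure h0.aestronglyMeasurable hV.aemeasurable).mp h0
  have hexp_int : Integrable (fun ω => Real.exp |t * V ω|) μ := by
    refine ((hexp_comp t).add (hexp_comp (-t))).mono'
      ((Real.measurable_exp.comp ((measurable_const.mul hV).abs)).aestronglyMeasurable)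
      (ae_of_all _ fun ω => ?_)
    rw [Real.norm_of_nonneg (Real.exp_nonneg _)]
    simp only [Pi.add_apply, neg_mul]
    rcases abs_cases (t * V ω) with ⟨h1, _⟩ | ⟨h1, _⟩ <;> rw [h1] <;>
      linarith [Real.exp_nonneg (t * V ω), Real.exp_nonneg (-(t * V ω))]
  -- the terms of the series
  set F : ℕ → Ω → ℂ := fun n ω => ((t : ℂ) * V ω * Complex.I) ^ n / (n.factorial : ℂ) with hF_def
  have hF_meas : ∀ n, Measurable (F n) := fun n => (hVc.pow_const n).div_const _
  have hF_norm : ∀ n ω, (‖F n ω‖₊ : ℝ≥0∞) = ENNReal.ofReal (|t * V ω| ^ n / n.factorial) := by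
    intro n ω
    rw [← enorm_eq_nnnorm, ← ofReal_norm]
    congr 1
    simp [hF_def, norm_div, norm_pow, map_mul, Complex.norm_I, Complex.norm_real, abs_mul]
  have hsum : ∑' n, ∫⁻ ω, ‖F n ω‖₊ ∂μ ≠ ∞ := by
    have h1 : ∑' n, ∫⁻ ω, ‖F n ω‖₊ ∂μ = ∫⁻ ω, ENNReal.ofReal (Real.exp |t * V ω|) ∂μ := by
      rw [← lintegral_tsum (f := fun n ω => (‖F n ω‖₊ : ℝ≥0∞)) (fun n => (hF_meas n).enorm.aemeasurable)]
      congr 1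
      ext ω
      simp_rw [hF_norm]
      rw [← ENNReal.ofReal_tsum_of_nonneg (fun n => by positivity)
        (Real.summable_pow_div_factorial _)]
      congr 1
      rw [Real.exp_eq_exp_ℝ, NormedSpace.exp_eq_tsum_div]
    rw [h1]
    have h2 := hexp_int.2
    rw [HasFiniteIntegral] at h2
    refine ne_of_lt (lt_of_le_of_lt (le_of_eq ?_) h2)
    congr 1
    ext ω
    rw [← ofReal_norm, Real.norm_of_nonneg (Real.exp_nonneg _)]
  -- series expansion of set integrals
  have key : ∀ s : Set Ω, MeasurableSet s →
      ∫ ω in s, f ω ∂μ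
        = ∑' n, ((t : ℂ) * Complex.I) ^ n / n.factorial * ((∫ ω in s, V ω ^ n ∂μ : ℝ) : ℂ) := by
    intro s hs
    have hptw : ∀ ω, f ω = ∑' n, F n ω := by
      intro ω
      rw [hf_def, Complex.exp_eq_exp_ℂ, NormedSpace.exp_eq_tsum_div]
    calc ∫ ω in s, f ω ∂μ = ∫ ω in s, ∑' n, F n ω ∂μ := by simp_rw [hptw]
      _ = ∑' n, ∫ ω in s, F n ω ∂μ := by
          refine integral_tsum (fun n => (hF_meas n).aestronglyMeasurable) ?_
          refine ne_of_lt (lt_of_le_of_lt (ENNReal.tsum_le_tsum fun n =>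
            lintegral_mono' Measure.restrict_le_self le_rfl) (lt_of_le_of_ne le_top hsum))
      _ = ∑' n, ((t : ℂ) * Complex.I) ^ n / n.factorial * ((∫ ω in s, V ω ^ n ∂μ : ℝ) : ℂ) := by
          congr 1
          ext n
          have : ∀ ω, F n ω = ((t : ℂ) * Complex.I) ^ n / n.factorial * ((V ω ^ n : ℝ) : ℂ) := by
            intro ω
            simp only [hF_def]
            push_cast
            ring
          simp_rw [this]
          rw [integral_const_mul]
          congr 1
          exact integral_ofReal
  -- conditional moments on m-measurable sets
  have hmom_set : ∀ (n : ℕ) (s : Set Ω), MeasurableSet[MeasurableSpace.comap ξ inferInstance] s →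
      ∫ ω in s, V ω ^ n ∂μ = (μ s).toReal * ∫ ω, V ω ^ n ∂μ := by
    intro n s hs
    rw [← setIntegral_condExp hm (hmom n) hs]
    rw [integral_congr_ae (ae_restrict_of_ae (hcond n))]
    rw [setIntegral_const, smul_eq_mul, Measure.real]
  -- value of the full integral
  have hC : ∫ ω, f ω ∂μ = (Real.exp (-(t ^ 2 * c ^ 2) / 2) : ℂ) := by
    have hgm : AEStronglyMeasurable (fun x : ℝ => Complex.exp (t * x * Complex.I)) (μ.map V) :=
      (Complex.measurable_exp.comp
        ((measurable_const.mul Complex.measurable_ofReal).mul_const _)).aestronglyMeasurable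
    calc ∫ ω, f ω ∂μ = ∫ x, Complex.exp (t * x * Complex.I) ∂(μ.map V) :=
          (integral_map hV.aemeasurable hgm).symm
      _ = (Real.exp (-(t ^ 2 * c ^ 2) / 2) : ℂ) := by
          rw [hVgauss, my_charFun_gaussian t v hv, hvc]
  refine (ae_eq_condExp_of_forall_setIntegral_eq hm hf_int
    (fun s _ hμs => integrableOn_const hμs.ne) (fun s hs hμs => ?_)
    (stronglyMeasurable_const.aestronglyMeasurable)).symm
  rw [setIntegral_const, key s (hm s hs)]
  have h1 := fun n => hmom_set n s hs
  simp_rw [h1]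
  have h2 : ∀ n : ℕ, ((t : ℂ) * Complex.I) ^ n / n.factorial *
      ((((μ s).toReal * ∫ ω, V ω ^ n ∂μ : ℝ)) : ℂ)
      = ((μ s).toReal : ℂ) * (((t : ℂ) * Complex.I) ^ n / n.factorial *
        ((∫ ω, V ω ^ n ∂μ : ℝ) : ℂ)) := by
    intro n; push_cast; ring
  simp_rw [h2]
  rw [_root_.tsum_mul_left]
  have huniv := key Set.univ MeasurableSet.univ
  simp only [Measure.restrict_univ] at huniv
  rw [← huniv, hC, Complex.real_smul, Measure.real]
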